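/- If S and T are sets of s-simplices of K all of whose connected components are closed, then every connected component of S ∩ T is closed. -/

import Mathlib

open Finset
/-- The vertex set `V(S) = ⋃ S` of a set `S` of simplices. -/
def vertSet {V : Type*} (S : Set (Finset V)) : Set V := ⋃ σ ∈ S, (σ : Set V)

/-- A set `S` of s-simplices of `K` is closed if it contains every s-simplex of `K`
whose vertices all lie in `V(S)`. -/
def IsClosedSet {V : Type*} (K : Finset (Finset V)) (s : ℕ) (S : Set (Finset V)) : Prop :=
  ∀ σ ∈ K, σ.card = s + 1 → (σ : Set V) ⊆ vertSet S → σ ∈ S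

/-- The relation on simplices of `S` of having nonempty intersection. -/
def simpRel {V : Type*} [DecidableEq V] (S : Set (Finset V)) (a b : Finset V) : Prop :=
  a ∈ S ∧ b ∈ S ∧ (a ∩ b).Nonempty

/-- `S0` is a connected component of `S`: an equivalence class of the smallest
equivalence relation on `S` generated by nonempty pairwise intersection. -/
def IsComponent {V : Type*} [DecidableEq V] (S S0 : Set (Finset V)) : Prop :=
  ∃ σ₀ ∈ S, S0 = {τ | τ ∈ S ∧ Relation.EqvGen (simpRel S) σ₀ τ}

/-- The set of s-simplices of `K`, as a set. -/
def sSimplices {V : Type*} (K : Finset (Finset V)) (s : ℕ) : Set (Finset V) :=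
  {σ : Finset V | σ ∈ K ∧ σ.card = s + 1}

/-- The s-chromatic lattice: subsets of `F^s(K)` all of whose connected components
are closed. -/
def LsK {V : Type*} [DecidableEq V] (K : Finset (Finset V)) (s : ℕ) : Set (Set (Finset V)) :=
  {S | S ⊆ sSimplices K s ∧ ∀ S0, IsComponent S S0 → IsClosedSet K s S0}

/-- if all connected components of `S` and of `T` are closed, then all
connected components of `S ∩ T` are closed. -/
theorem stmt_6 {V : Type*} [Fintype V] [DecidableEq V]
    (K : Finset (Finset V)) (hK : ∀ σ ∈ K, ∀ τ, τ ⊆ σ → τ ∈ K) (s : ℕ)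
    (S T : Set (Finset V)) (hS : S ⊆ sSimplices K s) (hT : T ⊆ sSimplices K s)
    (hSc : ∀ S0, IsComponent S S0 → IsClosedSet K s S0)
    (hTc : ∀ T0, IsComponent T T0 → IsClosedSet K s T0) :
    ∀ R, IsComponent (S ∩ T) R → IsClosedSet K s R := by
  rintro R ⟨σ₀, hσ₀, rfl⟩ σ hσK hσcard hσsub
  -- monotonicity of EqvGen
  have mono : ∀ (A : Set (Finset V)), S ∩ T ⊆ A → ∀ τ,
      Relation.EqvGen (simpRel (S ∩ T)) σ₀ τ → Relation.EqvGen (simpRel A) σ₀ τ := by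
    intro A hA τ h
    refine Relation.EqvGen.mono ?_ _ _ h
    rintro a b ⟨ha, hb, hab⟩
    exact ⟨hA ha, hA hb, hab⟩
  have hRsub : ∀ (A : Set (Finset V)), S ∩ T ⊆ A →
      {τ | τ ∈ S ∩ T ∧ Relation.EqvGen (simpRel (S ∩ T)) σ₀ τ} ⊆
      {τ | τ ∈ A ∧ Relation.EqvGen (simpRel A) σ₀ τ} := by
    rintro A hA τ ⟨hτ1, hτ2⟩
    exact ⟨hA hτ1, mono A hA τ hτ2⟩
  have hvert : ∀ (A : Set (Finset V)), S ∩ T ⊆ A →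
      (σ : Set V) ⊆ vertSet {τ | τ ∈ A ∧ Relation.EqvGen (simpRel A) σ₀ τ} := by
    intro A hA x hx
    have hx' := hσsub hx
    unfold vertSet at hx' ⊢
    rw [Set.mem_iUnion₂] at hx' ⊢
    obtain ⟨τ, hτ, hxτ⟩ := hx'
    exact ⟨τ, hRsub A hA hτ, hxτ⟩
  -- σ ∈ S
  have hσS : σ ∈ {τ | τ ∈ S ∧ Relation.EqvGen (simpRel S) σ₀ τ} :=
    hSc _ ⟨σ₀, hσ₀.1, rfl⟩ σ hσK hσcard (hvert S Set.inter_subset_left)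
  have hσT : σ ∈ {τ | τ ∈ T ∧ Relation.EqvGen (simpRel T) σ₀ τ} :=
    hTc _ ⟨σ₀, hσ₀.2, rfl⟩ σ hσK hσcard (hvert T Set.inter_subset_right)
  have hσST : σ ∈ S ∩ T := ⟨hσS.1, hσT.1⟩
  refine ⟨hσST, ?_⟩
  -- find a simplex τ in the component meeting σ
  have hne : σ.Nonempty := Finset.card_pos.mp (by omega)
  obtain ⟨v, hv⟩ := hne
  have hv' := hσsub (show (v:V) ∈ (σ:Set V) by exact_mod_cast hv)
  unfold vertSet at hv'
  rw [Set.mem_iUnion₂] at hv'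
  obtain ⟨τ, ⟨hτST, hτeqv⟩, hvτ⟩ := hv'
  refine Relation.EqvGen.trans _ _ _ hτeqv (Relation.EqvGen.rel _ _ ?_)
  exact ⟨hτST, hσST, ⟨v, Finset.mem_inter.mpr ⟨by exact_mod_cast hvτ, hv⟩⟩⟩
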